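/- arXiv:2508.14147 — 6 statements merged into one kernel-verified Lean document; each statement's English description precedes it below -/
import Mathlib

section
/- Let G be a temporal graph, k ≥ 1 an integer, ts a start time, and e = (u,v,t) a temporal edge with t ≥ ts. Then the edge core time CT_ts(e) exists if and only if both vertex core times CT_ts(u) and CT_ts(v) exist; and in that case CT_ts(e) = max(CT_ts(u), CT_ts(v), t). -/
variable {V : Type*} [Fintype V]

/-- A vertex set `S` is `k`-dense in `G` if every vertex of `S` has
at least `k` neighbors of `G` lying in `S`. -/
def KDense (G : SimpleGraph V) (k : ℕ) (S : Set V) : Prop :=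
  ∀ v ∈ S, k ≤ (S ∩ G.neighborSet v).ncard

/-- The `k`-core of `G`: the union of all `k`-dense vertex sets. -/
def kCore (G : SimpleGraph V) (k : ℕ) : Set V :=
  ⋃₀ {S | KDense G k S}

/-- A temporal graph on a vertex set `V`: a finite set of temporal edges
`(u, v, t)` with `u ≠ v` and integer timestamp `t`. -/
structure TemporalGraph (V : Type*) where
  E : Finset (V × V × ℤ)
  ne : ∀ e ∈ E, e.1 ≠ e.2.1

/-- The projected (snapshot) graph of `G` over the time window `[ts, te]`. -/
def TemporalGraph.proj (G : TemporalGraph V) (ts te : ℤ) : SimpleGraph V where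
  Adj u v := ∃ t, ts ≤ t ∧ t ≤ te ∧ ((u, v, t) ∈ G.E ∨ (v, u, t) ∈ G.E)
  symm := by
    constructor
    rintro u v ⟨t, h1, h2, h3⟩
    exact ⟨t, h1, h2, h3.symm⟩
  loopless := by
    constructor
    rintro u ⟨t, h1, h2, h3⟩
    rcases h3 with h | h <;> exact G.ne _ h rfl

/-- The temporal `k`-core of the window `[ts, te]`: all temporal edges with
timestamp in `[ts, te]` whose both endpoints lie in the `k`-core of the
projected graph `G_[ts,te]`. -/
def TemporalGraph.tCore (G : TemporalGraph V) (k : ℕ) (ts te : ℤ) :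
    Set (V × V × ℤ) :=
  {e | e ∈ G.E ∧ ts ≤ e.2.2 ∧ e.2.2 ≤ te ∧
    e.1 ∈ kCore (G.proj ts te) k ∧ e.2.1 ∈ kCore (G.proj ts te) k}


lemma kCore_mono {G G' : SimpleGraph V} (h : G ≤ G') (k : ℕ) :
    kCore G k ⊆ kCore G' k := by
  intro v hv
  rcases hv with ⟨S, hS, hvS⟩
  refine ⟨S, fun w hw => ?_, hvS⟩
  refine le_trans (hS w hw) (Set.ncard_le_ncard ?_ (Set.toFinite _))
  exact Set.inter_subset_inter_right _ (fun x hx => h hx)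

lemma proj_mono (G : TemporalGraph V) (ts : ℤ) {te te' : ℤ} (h : te ≤ te') :
    G.proj ts te ≤ G.proj ts te' := by
  rintro a b ⟨s, h1, h2, h3⟩
  exact ⟨s, h1, h2.trans h, h3⟩

theorem edge_core_time_eq_max (G : TemporalGraph V) (k : ℕ) (hk : 1 ≤ k)
    (ts : ℤ) (u v : V) (t : ℤ) (he : (u, v, t) ∈ G.E) (ht : ts ≤ t) :
    ((∃ cte, IsLeast {x : ℤ | (u, v, t) ∈ G.tCore k ts x} cte) ↔
      ((∃ a, IsLeast {x : ℤ | ts ≤ x ∧ u ∈ kCore (G.proj ts x) k} a) ∧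
       (∃ b, IsLeast {x : ℤ | ts ≤ x ∧ v ∈ kCore (G.proj ts x) k} b))) ∧
    (∀ cte a b, IsLeast {x : ℤ | (u, v, t) ∈ G.tCore k ts x} cte →
      IsLeast {x : ℤ | ts ≤ x ∧ u ∈ kCore (G.proj ts x) k} a →
      IsLeast {x : ℤ | ts ≤ x ∧ v ∈ kCore (G.proj ts x) k} b →
      cte = max (max a b) t) := by

  classical
  have mono : ∀ (w : V) {x y : ℤ}, x ≤ y → w ∈ kCore (G.proj ts x) k →
      w ∈ kCore (G.proj ts y) k := fun w x y hxy hw =>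
    kCore_mono (proj_mono G ts hxy) k hw
  constructor
  · constructor
    · rintro ⟨cte, hcte⟩
      obtain ⟨⟨heE, hts, hle, hu, hv'⟩, -⟩ := hcte
      constructor
      · obtain ⟨a, ha, ha'⟩ := Int.exists_least_of_bdd (P := fun x => ts ≤ x ∧ u ∈ kCore (G.proj ts x) k)
          ⟨ts, fun z hz => hz.1⟩ ⟨cte, ht.trans hle, hu⟩
        exact ⟨a, ha, fun z hz => ha' z hz⟩
      · obtain ⟨b, hb, hb'⟩ := Int.exists_least_of_bdd (P := fun x => ts ≤ x ∧ v ∈ kCore (G.proj ts x) k)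
          ⟨ts, fun z hz => hz.1⟩ ⟨cte, ht.trans hle, hv'⟩
        exact ⟨b, hb, fun z hz => hb' z hz⟩
    · rintro ⟨⟨a, ha⟩, ⟨b, hb⟩⟩
      refine ⟨max (max a b) t, ⟨he, ht, le_max_right _ _, ?_, ?_⟩, ?_⟩
      · exact mono u (le_trans (le_max_left a b) (le_max_left _ _)) ha.1.2
      · exact mono v (le_trans (le_max_right a b) (le_max_left _ _)) hb.1.2
      · rintro x ⟨hxE, hxts, hxt, hxu, hxv⟩
        refine max_le (max_le ?_ ?_) hxt
        · exact ha.2 ⟨ht.trans hxt, hxu⟩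
        · exact hb.2 ⟨ht.trans hxt, hxv⟩
  · intro cte a b hcte ha hb
    refine hcte.unique ⟨⟨he, ht, le_max_right _ _, ?_, ?_⟩, ?_⟩
    · exact mono u (le_trans (le_max_left a b) (le_max_left _ _)) ha.1.2
    · exact mono v (le_trans (le_max_right a b) (le_max_left _ _)) hb.1.2
    · rintro x ⟨hxE, hxts, hxt, hxu, hxv⟩
      refine max_le (max_le ?_ ?_) hxt
      · exact ha.2 ⟨ht.trans hxt, hxu⟩
      · exact hb.2 ⟨ht.trans hxt, hxv⟩
end

section
/- Let G be a temporal graph, k ≥ 1 an integer, [ts,te] a time window, and e a temporal edge. Then e belongs to the temporal k-core C_[ts,te] if and only if there exists a minimal core window [t1,t2] of e with [t1,t2] ⊆ [ts,te]. -/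
variable {V : Type*} [Fintype V]

/-- `[t1, t2]` is a minimal core window of the temporal edge `e`:
`e` lies in the temporal `k`-core of `[t1, t2]` but in no temporal `k`-core
of a window properly contained in `[t1, t2]`. -/
def MinCoreWindow (G : TemporalGraph V) (k : ℕ) (e : V × V × ℤ)
    (t1 t2 : ℤ) : Prop :=
  e ∈ G.tCore k t1 t2 ∧
  ∀ ts' te', t1 ≤ ts' → te' ≤ t2 → (ts', te') ≠ (t1, t2) →
    e ∉ G.tCore k ts' te'

lemma tCore_mono (G : TemporalGraph V) (k : ℕ) {ts te ts' te' : ℤ}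
    (h1 : ts ≤ ts') (h2 : te' ≤ te) :
    G.tCore k ts' te' ⊆ G.tCore k ts te := by
  have hproj : G.proj ts' te' ≤ G.proj ts te := by
    rintro u v ⟨t, ht1, ht2, ht3⟩
    exact ⟨t, h1.trans ht1, ht2.trans h2, ht3⟩
  rintro x ⟨hE, ha, hb, hc, hd⟩
  exact ⟨hE, h1.trans ha, hb.trans h2, kCore_mono hproj k hc,
    kCore_mono hproj k hd⟩

theorem mem_tCore_iff_minCoreWindow (G : TemporalGraph V) (k : ℕ) (hk : 1 ≤ k)
    (ts te : ℤ) (hw : ts ≤ te) (e : V × V × ℤ) :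
    e ∈ G.tCore k ts te ↔
      ∃ t1 t2, MinCoreWindow G k e t1 t2 ∧ ts ≤ t1 ∧ t2 ≤ te := by
  constructor
  · intro he
    set P : Set ℕ := {n | ∃ t1 t2, ts ≤ t1 ∧ t2 ≤ te ∧ e ∈ G.tCore k t1 t2 ∧
      (t2 - t1).toNat = n} with hP
    have hne : P.Nonempty := ⟨(te - ts).toNat, ts, te, le_refl _, le_refl _, he, rfl⟩
    obtain ⟨n, ⟨t1, t2, ht1, ht2, hcore, hlen⟩, hmin⟩ :=
      Nat.lt_wfRel.wf.has_min P hne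
    refine ⟨t1, t2, ⟨hcore, ?_⟩, ht1, ht2⟩
    intro ts' te' hs hesub hne' hmem
    have ⟨_, ha, hb, _, _⟩ := hmem
    have hst : ts' ≤ te' := ha.trans hb
    have hlt : te' - ts' < t2 - t1 := by
      rcases eq_or_lt_of_le hs with h | h
      · rcases eq_or_lt_of_le hesub with h2 | h2
        · exact absurd (by rw [← h, h2]) hne'
        · omega
      · omega
    have : (te' - ts').toNat < n := by omega
    exact hmin _ ⟨ts', te', ht1.trans hs, hesub.trans ht2, hmem, rfl⟩ this
  · rintro ⟨t1, t2, ⟨hmem, _⟩, h1, h2⟩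
    exact tCore_mono G k h1 h2 hmem
end

section
/- Let G be a temporal graph, k ≥ 1 an integer, and [ts,te] a window with ts < te and C_[ts,te] nonempty. (a) If no edge of C_[ts,te] has timestamp ts, then C_[ts+1,te] = C_[ts,te]. (b) If no edge of C_[ts,te] has timestamp te, then C_[ts,te-1] = C_[ts,te]. -/
variable {V : Type*} [Fintype V]

lemma kCore_dense (G : SimpleGraph V) (k : ℕ) : KDense G k (kCore G k) := by
  rintro v ⟨S, hS, hvS⟩
  calc k ≤ (S ∩ G.neighborSet v).ncard := hS v hvS
    _ ≤ _ := Set.ncard_le_ncard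
      (Set.inter_subset_inter_left _ (Set.subset_sUnion_of_mem hS)) (Set.toFinite _)

lemma kCore_mono_of (G H : SimpleGraph V) (k : ℕ)
    (h : ∀ v ∈ kCore G k, ∀ u ∈ kCore G k, G.Adj v u → H.Adj v u) :
    kCore G k ⊆ kCore H k := by
  refine Set.subset_sUnion_of_mem ?_
  intro w hw
  refine le_trans (kCore_dense G k w hw) (Set.ncard_le_ncard ?_ (Set.toFinite _))
  rintro u ⟨huK, hadj⟩
  exact ⟨huK, h w hw u huK hadj⟩

theorem tCore_shrink_of_no_boundary_edge (G : TemporalGraph V) (k : ℕ)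
    (hk : 1 ≤ k) (ts te : ℤ) (hlt : ts < te)
    (hne : (G.tCore k ts te).Nonempty) :
    ((∀ e ∈ G.tCore k ts te, e.2.2 ≠ ts) →
      G.tCore k (ts + 1) te = G.tCore k ts te) ∧
    ((∀ e ∈ G.tCore k ts te, e.2.2 ≠ te) →
      G.tCore k ts (te - 1) = G.tCore k ts te) := by
  constructor
  · intro hts
    ext e
    constructor
    · rintro ⟨heE, h1, h2, h3, h4⟩
      have hmono : kCore (G.proj (ts + 1) te) k ⊆ kCore (G.proj ts te) k :=
        kCore_mono_of _ _ _ (fun v _ u _ ⟨t, ht1, ht2, ht3⟩ => ⟨t, by omega, ht2, ht3⟩)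
      exact ⟨heE, by omega, h2, hmono h3, hmono h4⟩
    · rintro ⟨heE, h1, h2, h3, h4⟩
      have hmono : kCore (G.proj ts te) k ⊆ kCore (G.proj (ts + 1) te) k := by
        apply kCore_mono_of
        rintro v hv u hu ⟨t, ht1, ht2, ht3⟩
        have htne : t ≠ ts := by
          intro hts'
          rcases ht3 with h | h
          · exact hts (v, u, t) ⟨h, ht1, ht2, hv, hu⟩ hts'
          · exact hts (u, v, t) ⟨h, ht1, ht2, hu, hv⟩ hts'
        exact ⟨t, by omega, ht2, ht3⟩
      have hets : e.2.2 ≠ ts := hts e ⟨heE, h1, h2, h3, h4⟩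
      exact ⟨heE, by omega, h2, hmono h3, hmono h4⟩
  · intro hte
    ext e
    constructor
    · rintro ⟨heE, h1, h2, h3, h4⟩
      have hmono : kCore (G.proj ts (te - 1)) k ⊆ kCore (G.proj ts te) k :=
        kCore_mono_of _ _ _ (fun v _ u _ ⟨t, ht1, ht2, ht3⟩ => ⟨t, ht1, by omega, ht3⟩)
      exact ⟨heE, h1, by omega, hmono h3, hmono h4⟩
    · rintro ⟨heE, h1, h2, h3, h4⟩
      have hmono : kCore (G.proj ts te) k ⊆ kCore (G.proj ts (te - 1)) k := by
        apply kCore_mono_of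
        rintro v hv u hu ⟨t, ht1, ht2, ht3⟩
        have htne : t ≠ te := by
          intro hte'
          rcases ht3 with h | h
          · exact hte (v, u, t) ⟨h, ht1, ht2, hv, hu⟩ hte'
          · exact hte (u, v, t) ⟨h, ht1, ht2, hu, hv⟩ hte'
        exact ⟨t, ht1, by omega, ht3⟩
      have hets : e.2.2 ≠ te := hte e ⟨heE, h1, h2, h3, h4⟩
      exact ⟨heE, h1, by omega, hmono h3, hmono h4⟩
end

section
/- Let G be a temporal graph, k ≥ 1 an integer, and [ts,te] a window with C_[ts,te] nonempty, and let [a,b] = TTI(C_[ts,te]) be its tightest time interval. Then C_[a,b] = C_[ts,te], and TTI(C_[a,b]) = [a,b]. -/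
variable {V : Type*} [Fintype V]

/-- `[a, b]` is the tightest time interval of the edge set `C`:
`a` and `b` are the minimum and maximum timestamps of the edges in `C`. -/
def IsTTI (C : Set (V × V × ℤ)) (a b : ℤ) : Prop :=
  IsLeast {t | ∃ e ∈ C, e.2.2 = t} a ∧ IsGreatest {t | ∃ e ∈ C, e.2.2 = t} b

theorem tCore_of_TTI (G : TemporalGraph V) (k : ℕ) (hk : 1 ≤ k)
    (ts te a b : ℤ) (hw : ts ≤ te)
    (hne : (G.tCore k ts te).Nonempty)
    (hTTI : IsTTI (G.tCore k ts te) a b) :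
    G.tCore k a b = G.tCore k ts te ∧ IsTTI (G.tCore k a b) a b := by
  obtain ⟨⟨⟨ea, hea, heat⟩, hlb⟩, ⟨eb, heb, hebt⟩, hub⟩ := hTTI
  have hta : ts ≤ a := heat ▸ hea.2.1
  have hbte : b ≤ te := hebt ▸ heb.2.2.1
  set W := kCore (G.proj ts te) k with hW
  have hdense : KDense (G.proj ts te) k W := by
    intro v hv
    obtain ⟨S, hS, hvS⟩ := hv
    refine le_trans (hS v hvS) (Set.ncard_le_ncard ?_ (Set.toFinite _))
    exact Set.inter_subset_inter_left _ (fun x hx => ⟨S, hS, hx⟩)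
  have hdense' : KDense (G.proj a b) k W := by
    intro v hv
    refine le_trans (hdense v hv) (Set.ncard_le_ncard ?_ (Set.toFinite _))
    rintro u ⟨huW, t, h1, h2, h3⟩
    have htm : a ≤ t ∧ t ≤ b := by
      rcases h3 with h | h
      · have hC : ((v, u, t) : V × V × ℤ) ∈ G.tCore k ts te := ⟨h, h1, h2, hv, huW⟩
        exact ⟨hlb ⟨_, hC, rfl⟩, hub ⟨_, hC, rfl⟩⟩
      · have hC : ((u, v, t) : V × V × ℤ) ∈ G.tCore k ts te := ⟨h, h1, h2, huW, hv⟩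
        exact ⟨hlb ⟨_, hC, rfl⟩, hub ⟨_, hC, rfl⟩⟩
    exact ⟨huW, t, htm.1, htm.2, h3⟩
  have hle : ∀ u v : V, (G.proj a b).Adj u v → (G.proj ts te).Adj u v := by
    rintro u v ⟨t, h1, h2, h3⟩
    exact ⟨t, hta.trans h1, h2.trans hbte, h3⟩
  have hcore : kCore (G.proj a b) k = W := by
    apply subset_antisymm
    · rintro v ⟨S, hS, hvS⟩
      refine ⟨S, fun w hw => ?_, hvS⟩
      refine le_trans (hS w hw) (Set.ncard_le_ncard ?_ (Set.toFinite _))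
      exact Set.inter_subset_inter_right _ (fun x hx => hle _ _ hx)
    · exact fun v hv => ⟨W, hdense', hv⟩
  have hEq : G.tCore k a b = G.tCore k ts te := by
    ext e
    constructor
    · rintro ⟨hE, h1, h2, h3, h4⟩
      exact ⟨hE, hta.trans h1, h2.trans hbte, (hcore.trans hW) ▸ h3, (hcore.trans hW) ▸ h4⟩
    · rintro ⟨hE, h1, h2, h3, h4⟩
      have hC : e ∈ G.tCore k ts te := ⟨hE, h1, h2, h3, h4⟩
      exact ⟨hE, hlb ⟨e, hC, rfl⟩, hub ⟨e, hC, rfl⟩, (hcore.trans hW).symm ▸ h3, (hcore.trans hW).symm ▸ h4⟩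
  refine ⟨hEq, ?_⟩
  rw [show IsTTI (G.tCore k a b) a b = IsTTI (G.tCore k ts te) a b by rw [hEq]]
  exact ⟨⟨⟨ea, hea, heat⟩, hlb⟩, ⟨eb, heb, hebt⟩, hub⟩
end

section
/- Let G be a temporal graph and k ≥ 1 an integer. Suppose C_[ts,te] is nonempty and TTI(C_[ts,te]) = [ts,te]. Then there exists a temporal edge e with a minimal core window [t1,t2] such that (1) ts ≤ t1 and t2 = te, and (2) e has no minimal core window [t1',t2'] with ts ≤ t1' < t1. -/
variable {V : Type*} [Fintype V]

theorem valid_end_time_necessary_one (G : TemporalGraph V) (k : ℕ)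
    (hk : 1 ≤ k) (ts te : ℤ)
    (hne : (G.tCore k ts te).Nonempty)
    (hTTI : IsTTI (G.tCore k ts te) ts te) :
    ∃ (e : V × V × ℤ) (t1 : ℤ), MinCoreWindow G k e t1 te ∧ ts ≤ t1 ∧
      ∀ t1' t2', MinCoreWindow G k e t1' t2' → ts ≤ t1' → ¬ t1' < t1 := by
  obtain ⟨⟨e, heC, hete⟩, -⟩ := hTTI.2
  subst hete
  obtain ⟨t1, ⟨hts1, h1C⟩, hmax⟩ :=
    Int.exists_greatest_of_bdd (P := fun s => ts ≤ s ∧ e ∈ G.tCore k s e.2.2)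
      ⟨e.2.2, fun z hz => hz.2.2.1⟩ ⟨ts, le_refl ts, heC⟩
  refine ⟨e, t1, ⟨h1C, ?_⟩, hts1, ?_⟩
  · intro ts' te' h1 h2 hne' hmem
    have hte' : te' = e.2.2 := le_antisymm h2 hmem.2.2.1
    subst hte'
    have hts'eq : ts' = t1 := le_antisymm (hmax ts' ⟨hts1.trans h1, hmem⟩) h1
    exact hne' (by rw [hts'eq])
  · intro t1' t2' hmcw hts' hlt
    exact hmcw.2 t1 e.2.2 hlt.le hmcw.1.2.2.1
      (fun h => hlt.ne' (congrArg Prod.fst h)) h1C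
end

section
/- Let G be a temporal graph and k ≥ 1 an integer. Suppose C_[ts,te] is nonempty and TTI(C_[ts,te]) = [ts,te]. Then there exists a temporal edge e with a minimal core window [t1,t2] such that t1 = ts and t2 ≤ te. -/
variable {V : Type*} [Fintype V]

theorem valid_end_time_necessary_two (G : TemporalGraph V) (k : ℕ)
    (hk : 1 ≤ k) (ts te : ℤ)
    (hne : (G.tCore k ts te).Nonempty)
    (hTTI : IsTTI (G.tCore k ts te) ts te) :
    ∃ (e : V × V × ℤ) (t2 : ℤ), MinCoreWindow G k e ts t2 ∧ t2 ≤ te := by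
  classical
  obtain ⟨e, heC, het⟩ := hTTI.1.1
  -- least end time b such that e ∈ tCore k ts b
  have hbdd : ∃ b : ℤ, ∀ z : ℤ, e ∈ G.tCore k ts z → b ≤ z := by
    refine ⟨ts, fun z hz => ?_⟩
    have := hz.2.2.1
    omega
  obtain ⟨t2, ht2, hmin⟩ := Int.exists_least_of_bdd hbdd ⟨te, heC⟩
  refine ⟨e, t2, ⟨ht2, ?_⟩, hmin te heC⟩
  intro a b ha hb hneq hmem
  have ha' : a ≤ ts := by have := hmem.2.1; omega
  have haa : a = ts := le_antisymm ha' ha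
  subst haa
  have : t2 ≤ b := hmin b hmem
  have hb2 : b = t2 := le_antisymm hb this
  exact hneq (by rw [hb2])
end
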